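/- Let m ∈ ℤ and n ∈ ℕ with m and n relatively prime. Let (υ_i) be a sequence in (0,1] and (t_i) a sequence of real numbers. Then the following are equivalent: (1) for every polynomial P ∈ ℤ[X], the sequence |P(t_i)|^{υ_i} (Euclidean absolute value) converges to 0 if P(m/n) = 0 (evaluation in ℚ) and to 1 otherwise; (2) υ_i → 0 and |t_i − m/n|^{υ_i} → 0. -/

import Mathlib

open Filter Polynomial Real

/-- Let `m ∈ ℤ` and `n ∈ ℕ` be relatively prime, `(υ_i)` a sequence in `(0,1]` and
`(t_i)` a sequence of reals. The images of the `t_i` under `ℝ_{υ_i}` converge in `𝔸¹_ℤ`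
to the image of `m/n ∈ ℚ` (trivial valuation) iff `υ_i → 0` and `|t_i − m/n|^{υ_i} → 0`. -/
theorem tendsto_reals_to_rational_iff (m : ℤ) (n : ℕ) (hn : 0 < n)
    (hmn : IsCoprime m (n : ℤ)) (υ : ℕ → ℝ) (hυ : ∀ i, υ i ∈ Set.Ioc (0 : ℝ) 1)
    (t : ℕ → ℝ) :
    (∀ P : Polynomial ℤ,
        Filter.Tendsto (fun i => |(Polynomial.aeval (t i) P : ℝ)| ^ υ i) Filter.atTop
          (nhds (if (Polynomial.aeval ((m : ℚ) / (n : ℚ)) P : ℚ) = 0 then (0 : ℝ) else 1))) ↔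
      (Filter.Tendsto υ Filter.atTop (nhds 0) ∧
        Filter.Tendsto (fun i => |t i - (m : ℝ) / (n : ℝ)| ^ υ i) Filter.atTop (nhds 0)) := by
  have hn' : (0 : ℝ) < n := by exact_mod_cast hn
  set c : ℝ := (m : ℝ) / (n : ℝ) with hc
  have hcast : ∀ P : Polynomial ℤ,
      ((Polynomial.aeval ((m : ℚ) / (n : ℚ)) P : ℚ) : ℝ) = Polynomial.aeval c P := by
    intro P
    have h1 : Polynomial.aeval ((algebraMap ℚ ℝ) ((m : ℚ) / (n : ℚ))) P
        = algebraMap ℚ ℝ (Polynomial.aeval ((m : ℚ) / (n : ℚ)) P) :=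
      Polynomial.aeval_algebraMap_apply ℝ _ P
    have h2 : (algebraMap ℚ ℝ) ((m : ℚ) / (n : ℚ)) = c := by
      rw [hc, eq_ratCast (algebraMap ℚ ℝ)]; push_cast; ring
    rw [h2] at h1
    simpa using h1.symm
  constructor
  · intro h
    have hν : Tendsto υ atTop (nhds 0) := by
      have h2 := h 2
      have hne : ¬ (Polynomial.aeval ((m : ℚ) / (n : ℚ)) (2 : Polynomial ℤ) : ℚ) = 0 := by
        simp only [map_ofNat]; norm_num
      rw [if_neg hne] at h2
      simp only [map_ofNat, abs_two] at h2
      have h2' : Tendsto (fun i => (2 : ℝ) ^ υ i) atTop (nhds 1) := h2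
      have hlog : Tendsto (fun i => Real.log ((2 : ℝ) ^ υ i)) atTop (nhds (Real.log 1)) :=
        h2'.log one_ne_zero
      have hlog' : Tendsto (fun i => υ i * Real.log 2) atTop (nhds 0) := by
        simpa [Real.log_rpow two_pos] using hlog
      have := hlog'.mul_const (Real.log 2)⁻¹
      simpa [mul_assoc, mul_inv_cancel₀ (Real.log_ne_zero_of_pos_of_ne_one two_pos (by norm_num))]
        using this
    refine ⟨hν, ?_⟩
    have hP := h (Polynomial.C (n : ℤ) * Polynomial.X - Polynomial.C m)
    have hz : (Polynomial.aeval ((m : ℚ) / (n : ℚ))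
        (Polynomial.C (n : ℤ) * Polynomial.X - Polynomial.C m) : ℚ) = 0 := by
      have : (n : ℚ) ≠ 0 := by exact_mod_cast hn.ne'
      simp only [map_sub, map_mul, Polynomial.aeval_C, Polynomial.aeval_X, eq_intCast, Int.cast_natCast, map_natCast, map_intCast]
      field_simp
      ring
    rw [if_pos hz] at hP
    have hkey : ∀ i, |t i - c| ^ υ i ≤ |(n : ℝ) * t i - m| ^ υ i := by
      intro i
      have hup : (0 : ℝ) ≤ υ i := (hυ i).1.le
      have heq : |t i - c| = |(n : ℝ) * t i - m| / n := by
        have hh : (n : ℝ) * t i - m = (t i - c) * n := by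
          field_simp [hc]
          rw [hc]; field_simp
        rw [hh, abs_mul, abs_of_pos hn', mul_div_cancel_right₀ _ hn'.ne']
      rw [heq, Real.div_rpow (abs_nonneg _) hn'.le]
      apply div_le_self (Real.rpow_nonneg (abs_nonneg _) _)
      calc (1 : ℝ) = 1 ^ υ i := (Real.one_rpow _).symm
        _ ≤ (n : ℝ) ^ υ i := Real.rpow_le_rpow zero_le_one (by exact_mod_cast hn) hup
    have hP' : Tendsto (fun i => |(n : ℝ) * t i - m| ^ υ i) atTop (nhds 0) := by
      convert hP using 2 with i
      simp
    exact squeeze_zero (fun i => Real.rpow_nonneg (abs_nonneg _) _) hkey hP'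
  · rintro ⟨hν, ht⟩
    -- t i → c
    have htc : Tendsto t atTop (nhds c) := by
      rw [Metric.tendsto_atTop]
      intro ε hε
      rw [Metric.tendsto_atTop] at ht
      obtain ⟨N, hN⟩ := ht (min ε 1) (lt_min hε one_pos)
      refine ⟨N, fun i hi => ?_⟩
      have h1 := hN i hi
      rw [Real.dist_eq, sub_zero, abs_of_nonneg (Real.rpow_nonneg (abs_nonneg _) _)] at h1
      rw [Real.dist_eq]
      set x := |t i - c| with hx
      have hx0 : 0 ≤ x := abs_nonneg _
      rcases eq_or_lt_of_le hx0 with h0 | h0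
      · simpa [← h0] using hε
      have hx1 : x < 1 := by
        by_contra hcon
        push_neg at hcon
        have : (1 : ℝ) ≤ x ^ υ i := by
          calc (1:ℝ) = 1 ^ υ i := (Real.one_rpow _).symm
            _ ≤ x ^ υ i := Real.rpow_le_rpow zero_le_one hcon (hυ i).1.le
        exact absurd (lt_of_le_of_lt this h1) (by simp)
      have : x ^ (1 : ℝ) ≤ x ^ υ i :=
        Real.rpow_le_rpow_of_exponent_ge h0 hx1.le (hυ i).2
      rw [Real.rpow_one] at this
      exact lt_of_le_of_lt this (lt_of_lt_of_le h1 (min_le_left _ _))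
    intro P
    by_cases hz : (Polynomial.aeval ((m : ℚ) / (n : ℚ)) P : ℚ) = 0
    · rw [if_pos hz]
      have hroot : Polynomial.aeval c P = 0 := by
        rw [← hcast P, hz]; norm_num
      -- factor over ℝ
      set Pr : Polynomial ℝ := P.map (algebraMap ℤ ℝ) with hPr
      have hroot' : Pr.IsRoot c := by
        rw [Polynomial.IsRoot, hPr, Polynomial.eval_map_algebraMap]
        exact hroot
      obtain ⟨Q, hQ⟩ := (Polynomial.dvd_iff_isRoot).2 hroot'
      have heval : ∀ x : ℝ, (Polynomial.aeval x P : ℝ) = (x - c) * Q.eval x := by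
        intro x
        rw [← Polynomial.eval_map_algebraMap, ← hPr, hQ]

        simp [mul_comm]
      -- Q.eval (t i) bounded eventually
      have hQt : Tendsto (fun i => |Q.eval (t i)|) atTop (nhds |Q.eval c|) :=
        ((Q.continuous.continuousAt.tendsto.comp htc).abs : _)
      set M : ℝ := max 1 (|Q.eval c| + 1) with hM
      have hM1 : (1 : ℝ) ≤ M := le_max_left _ _
      have hbd : ∀ᶠ i in atTop, |Q.eval (t i)| ≤ M := by
        filter_upwards [hQt.eventually (eventually_le_nhds (lt_add_one _))] with i hi
        exact hi.trans (le_max_right _ _)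
      have hub : ∀ᶠ i in atTop,
          |(Polynomial.aeval (t i) P : ℝ)| ^ υ i ≤ |t i - c| ^ υ i * M := by
        filter_upwards [hbd] with i hi
        rw [heval, abs_mul, Real.mul_rpow (abs_nonneg _) (abs_nonneg _)]
        apply mul_le_mul_of_nonneg_left _ (Real.rpow_nonneg (abs_nonneg _) _)
        calc |Q.eval (t i)| ^ υ i ≤ M ^ υ i :=
              Real.rpow_le_rpow (abs_nonneg _) hi (hυ i).1.le
          _ ≤ M ^ (1 : ℝ) := Real.rpow_le_rpow_of_exponent_le hM1 (hυ i).2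
          _ = M := Real.rpow_one M
      have hlim : Tendsto (fun i => |t i - c| ^ υ i * M) atTop (nhds 0) := by
        simpa using ht.mul_const M
      exact squeeze_zero' (Eventually.of_forall fun i => Real.rpow_nonneg (abs_nonneg _) _)
        hub hlim
    · rw [if_neg hz]
      have hL : (0 : ℝ) < |Polynomial.aeval c P| := by
        rw [abs_pos, ← hcast P]
        exact_mod_cast hz
      have hT : Tendsto (fun i => |(Polynomial.aeval (t i) P : ℝ)|) atTop
          (nhds |Polynomial.aeval c P|) :=
        ((P.continuous_aeval.continuousAt.tendsto.comp htc).abs : _)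
      have hpos : ∀ᶠ i in atTop, 0 < |(Polynomial.aeval (t i) P : ℝ)| :=
        hT.eventually (eventually_gt_nhds hL)
      have hlog : Tendsto (fun i => υ i * Real.log |(Polynomial.aeval (t i) P : ℝ)|)
          atTop (nhds 0) := by
        have := hν.mul (hT.log hL.ne')
        simpa using this
      have hexp : Tendsto (fun i =>
          Real.exp (υ i * Real.log |(Polynomial.aeval (t i) P : ℝ)|)) atTop (nhds 1) := by
        simpa [Function.comp_def] using (Real.continuous_exp.continuousAt.tendsto.comp hlog)
      refine hexp.congr' ?_
      filter_upwards [hpos] with i hi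
      rw [Real.rpow_def_of_pos hi, mul_comm]
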